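/- For λ ∈ (0,1) and r ∈ (0,1), with g(t) = (λ - t)/(1 - λt), one has |g(0)| + ∑_{n≥1} |c_n| r^n + (1/(1+λ) + r/(1-r)) ∑_{n≥1} |c_n|^2 r^{2n} + |g(r) - g(0)| = 1 + (1-λ)[(1+λ)r/(1-λr) + (1+λ)r/(1-r) - 1], where c_n = λ^{n-1}(λ^2 - 1) are the Taylor coefficients of g. -/

import Mathlib

theorem mobius_sharpness_identity (lam r : ℝ) (hl : lam ∈ Set.Ioo (0 : ℝ) 1)
    (hr : r ∈ Set.Ioo (0 : ℝ) 1) :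
    |((lam - 0) / (1 - lam * 0))| +
      (∑' n : ℕ, |lam ^ n * (lam ^ 2 - 1)| * r ^ (n + 1)) +
      (1 / (1 + lam) + r / (1 - r)) *
        (∑' n : ℕ, |lam ^ n * (lam ^ 2 - 1)| ^ 2 * r ^ (2 * (n + 1))) +
      |(lam - r) / (1 - lam * r) - (lam - 0) / (1 - lam * 0)| =
    1 + (1 - lam) * ((1 + lam) * r / (1 - lam * r) + (1 + lam) * r / (1 - r) - 1) := by
  obtain ⟨hl0, hl1⟩ := hl
  obtain ⟨hr0, hr1⟩ := hr
  have hlr : lam * r < 1 := by nlinarith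
  have hlr0 : 0 < lam * r := mul_pos hl0 hr0
  have hl2 : lam ^ 2 < 1 := by nlinarith
  have habs : |lam ^ 2 - 1| = 1 - lam ^ 2 := by rw [abs_of_nonpos (by nlinarith)]; ring
  have h1 : (∑' n : ℕ, |lam ^ n * (lam ^ 2 - 1)| * r ^ (n + 1))
      = (1 - lam ^ 2) * r * (1 - lam * r)⁻¹ := by
    have : ∀ n : ℕ, |lam ^ n * (lam ^ 2 - 1)| * r ^ (n + 1)
        = (1 - lam ^ 2) * r * (lam * r) ^ n := by
      intro n
      rw [abs_mul, abs_of_nonneg (pow_nonneg hl0.le n), habs, mul_pow]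
      ring
    rw [tsum_congr this, tsum_mul_left, tsum_geometric_of_lt_one hlr0.le hlr]
  have hl2r : lam ^ 2 * r ^ 2 < 1 := by nlinarith
  have h2 : (∑' n : ℕ, |lam ^ n * (lam ^ 2 - 1)| ^ 2 * r ^ (2 * (n + 1)))
      = (1 - lam ^ 2) ^ 2 * r ^ 2 * (1 - lam ^ 2 * r ^ 2)⁻¹ := by
    have : ∀ n : ℕ, |lam ^ n * (lam ^ 2 - 1)| ^ 2 * r ^ (2 * (n + 1))
        = (1 - lam ^ 2) ^ 2 * r ^ 2 * (lam ^ 2 * r ^ 2) ^ n := by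
      intro n
      rw [abs_mul, abs_of_nonneg (pow_nonneg hl0.le n), habs, pow_mul, mul_pow, mul_pow]
      ring
    rw [tsum_congr this, tsum_mul_left,
      tsum_geometric_of_lt_one (by positivity) hl2r]
  rw [h1, h2]
  have h3 : |(lam - 0) / (1 - lam * 0)| = lam := by
    simp [abs_of_nonneg hl0.le]
  have h4 : |(lam - r) / (1 - lam * r) - (lam - 0) / (1 - lam * 0)|
      = r * (1 - lam ^ 2) / (1 - lam * r) := by
    have hne : (1 : ℝ) - lam * r ≠ 0 := by nlinarith
    simp only [mul_zero, sub_zero, div_one]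
    rw [abs_of_nonpos]
    · field_simp
      ring
    · rw [div_sub' hne]
      apply div_nonpos_of_nonpos_of_nonneg
      · nlinarith
      · nlinarith
  rw [h3, h4]
  have hne1 : (1 : ℝ) - lam * r ≠ 0 := by nlinarith
  have hne2 : (1 : ℝ) - r ≠ 0 := by nlinarith
  have hne3 : (1 : ℝ) + lam ≠ 0 := by nlinarith
  have hne4 : (1 : ℝ) - lam ^ 2 * r ^ 2 ≠ 0 := by nlinarith
  field_simp
  ring
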